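/- For any real number x and any n ≥ 1, the sum over all permutations s of {1,…,n} of x raised to the number of cycles of s equals the rising factorial x(x+1)⋯(x+n-1); i.e., Σ_{s ∈ Sym(n)} x^{c(s)} = ∏_{j=0}^{n-1} (x + j), where c(s) is the number of cycles of s (fixed points counted as cycles of length 1). -/

import Mathlib

open Equiv Equiv.Perm

noncomputable def cQ {α : Type*} (σ : Perm α) : ℕ :=
  Nat.card (Quotient (SameCycle.setoid σ))

variable {α : Type*} [Fintype α] [DecidableEq α]

private def cyclabel (σ : Perm α) (x : α) :
    {x // σ x = x} ⊕ {c // c ∈ σ.cycleFactorsFinset} :=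
  if h : σ x = x then Sum.inl ⟨x, h⟩ else
    Sum.inr ⟨σ.cycleOf x, cycleOf_mem_cycleFactorsFinset_iff.2 (mem_support.2 h)⟩

private theorem cyclabel_eq_iff (σ : Perm α) (x y : α) :
    cyclabel σ x = cyclabel σ y ↔ σ.SameCycle x y := by
  constructor
  · intro h
    unfold cyclabel at h
    split_ifs at h with hx hy hy
    all_goals first
      | (simp only [reduceCtorEq] at h)
      | (injection h with h'
         have h2 := Subtype.mk_eq_mk.1 h'
         first
           | (cases h2; exact SameCycle.refl _ _)
           | (have hy2 : ¬ σ y = y := by assumption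
              have hy' : y ∈ (σ.cycleOf x).support := by
                rw [h2, mem_support_cycleOf_iff]
                exact ⟨SameCycle.refl _ _, mem_support.2 hy2⟩
              exact (mem_support_cycleOf_iff.1 hy').1))
  · intro hxy
    by_cases hx : σ x = x
    · have hy : y = x := by
        obtain ⟨k, hk⟩ := hxy
        rw [← hk, zpow_apply_eq_self_of_apply_eq_self hx]
      subst hy; rfl
    · have hy : ¬ σ y = y := fun h => hx ((hxy.apply_eq_self_iff.2 h))
      simp only [cyclabel, dif_neg hx, dif_neg hy, Sum.inr.injEq, Subtype.mk.injEq]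
      exact hxy.cycleOf_eq

/-- bridge lemma -/
theorem cQ_eq (σ : Perm α) :
    cQ σ = (Fintype.card α - σ.support.card) + Multiset.card σ.cycleType := by
  classical
  have hco : ∀ (a b : α), (SameCycle.setoid σ).r a b → cyclabel σ a = cyclabel σ b :=
    fun a b h => (cyclabel_eq_iff σ a b).2 h
  have hbij : Function.Bijective (Quotient.lift (cyclabel σ) hco) := by
    constructor
    · rintro ⟨x⟩ ⟨y⟩ h
      exact Quotient.sound ((cyclabel_eq_iff σ x y).1 h)
    · rintro (⟨x, hx⟩ | ⟨c, hc⟩)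
      · exact ⟨Quotient.mk _ x, by simp [cyclabel, dif_pos hx]⟩
      · have hmem := mem_cycleFactorsFinset_iff.1 hc
        obtain ⟨a, ha⟩ := hmem.1.nonempty_support
        have hac : c = σ.cycleOf a := cycle_is_cycleOf ha hc
        have haσ : ¬ σ a = a := by
          rw [← hmem.2 a ha]; exact mem_support.1 ha
        exact ⟨Quotient.mk _ a, by simp [cyclabel, dif_neg haσ, ← hac]⟩
  have hcard := Nat.card_eq_of_bijective _ hbij
  rw [cQ, hcard, Nat.card_sum, Nat.card_eq_fintype_card, Nat.card_eq_fintype_card,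
    Fintype.card_subtype, Fintype.card_coe]
  congr 1
  · have := Finset.card_filter_add_card_filter_not (s := (Finset.univ : Finset α))
      (p := fun x => σ x = x)
    have hsupp : σ.support = Finset.filter (fun x => ¬ σ x = x) Finset.univ := rfl
    rw [hsupp]
    have h2 : (Finset.univ : Finset α).card = Fintype.card α := Finset.card_univ
    omega
  · rw [cycleType_def, Multiset.card_map]
    rfl

section OptionLemmas

variable {β : Type*}

private theorem rel_zpow (τ : Perm β) (R : β → β → Prop) (hrefl : ∀ u, R u u)
    (hsymm : ∀ {u v}, R u v → R v u) (htrans : ∀ {u v w}, R u v → R v w → R u w)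
    (hstep : ∀ u, R u (τ u)) : ∀ (k : ℤ) (u : β), R u ((τ ^ k) u) := by
  have hinv : ∀ u, R u (τ⁻¹ u) := fun u => hsymm (by simpa using hstep (τ⁻¹ u))
  intro k
  induction k using Int.induction_on with
  | zero => simpa using hrefl
  | succ k ih =>
      intro u
      have : (τ ^ ((k : ℤ) + 1)) u = (τ ^ (k : ℤ)) (τ u) := by
        rw [zpow_add_one]; rfl
      rw [this]
      exact htrans (hstep u) (ih (τ u))
  | pred k ih =>
      intro u
      have : (τ ^ (-(k : ℤ) - 1)) u = (τ ^ (-(k : ℤ))) (τ⁻¹ u) := by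
        rw [zpow_sub_one]; rfl
      rw [this]
      exact htrans (hinv u) (ih (τ⁻¹ u))

/-- `optionCongr` as a monoid hom. -/
private def ocHom : Perm β →* Perm (Option β) where
  toFun := Equiv.optionCongr
  map_one' := by ext x; cases x <;> simp
  map_mul' a b := by ext x; cases x <;> simp

private theorem ocHom_zpow (e : Perm β) (k : ℤ) :
    (Equiv.optionCongr e) ^ k = Equiv.optionCongr (e ^ k) := by
  simpa [ocHom] using (map_zpow ocHom e k).symm

private theorem sameCycle_optionCongr_some {e : Perm β} {x y : β} :
    Equiv.Perm.SameCycle (Equiv.optionCongr e) (some x) (some y) ↔ e.SameCycle x y := by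
  constructor
  · rintro ⟨k, hk⟩
    refine ⟨k, ?_⟩
    rw [ocHom_zpow] at hk
    simpa using hk
  · rintro ⟨k, hk⟩
    exact ⟨k, by rw [ocHom_zpow]; simp [hk]⟩

private theorem sameCycle_optionCongr_none {e : Perm β} {u : Option β} :
    Equiv.Perm.SameCycle (Equiv.optionCongr e) none u ↔ u = none := by
  constructor
  · rintro ⟨k, hk⟩
    rw [ocHom_zpow] at hk
    simpa using hk.symm
  · rintro rfl; exact SameCycle.refl _ _

end OptionLemmas

section OptionCount

variable {β : Type*} [Fintype β] [DecidableEq β]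

private theorem cQ_optionCongr (e : Perm β) :
    cQ (Equiv.optionCongr e) = cQ e + 1 := by
  classical
  have key : ∀ a b : Option β, (SameCycle.setoid (Equiv.optionCongr e)).r a b →
      Option.map (Quotient.mk (SameCycle.setoid e)) a
        = Option.map (Quotient.mk (SameCycle.setoid e)) b := by
    rintro (_|x) (_|y) (h : Perm.SameCycle _ _ _)
    · rfl
    · exact absurd (sameCycle_optionCongr_none.1 h) (by simp)
    · exact absurd (sameCycle_optionCongr_none.1 h.symm) (by simp)
    · simpa using Quotient.sound (sameCycle_optionCongr_some.1 h)
  have key2 : ∀ a b : β, (SameCycle.setoid e).r a b →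
      (Quotient.mk (SameCycle.setoid (Equiv.optionCongr e)) (some a))
        = Quotient.mk _ (some b) := by
    intro a b h
    exact Quotient.sound (sameCycle_optionCongr_some.2 h)
  have : Nat.card (Quotient (SameCycle.setoid (Equiv.optionCongr e)))
      = Nat.card (Option (Quotient (SameCycle.setoid e))) := by
    refine Nat.card_congr ⟨Quotient.lift _ key,
      fun o => o.elim (Quotient.mk _ none) (Quotient.lift _ key2), ?_, ?_⟩
    · rintro ⟨(_|x)⟩ <;> rfl
    · rintro (_|x)
      · rfl
      · induction x using Quotient.ind; rfl
  rw [cQ, cQ, this, Finite.card_option]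

private theorem cQ_insert (e : Perm β) (a : β) :
    cQ (Equiv.swap none (some a) * Equiv.optionCongr e) = cQ e := by
  classical
  set σ : Perm (Option β) := Equiv.swap none (some a) * Equiv.optionCongr e with hσ
  have hnone : σ none = some a := by
    simp [hσ, Equiv.swap_apply_left]
  have hsome : ∀ z : β, σ (some z) = if e z = a then none else some (e z) := by
    intro z
    by_cases h : e z = a
    · simp [hσ, h, Equiv.swap_apply_right]
    · simp only [hσ, Perm.mul_apply, Equiv.optionCongr_apply, Option.map_some]
      rw [Equiv.swap_apply_of_ne_of_ne (by simp) (by simpa using h), if_neg h]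
  set π : Option β → β := fun u => u.elim a id with hπ
  -- transfer forward
  have T1 : ∀ u, e.SameCycle (π u) (π (σ u)) := by
    rintro (_|z)
    · simp only [hπ, hnone]
      exact SameCycle.refl _ _
    · rw [hsome z]
      by_cases h : e z = a
      · simp only [h, if_pos]
        exact ⟨1, by simpa [hπ] using h⟩
      · simp only [if_neg h, hπ]
        exact ⟨1, by simp⟩
  have T2 : ∀ (k : ℤ) (u), e.SameCycle (π u) (π ((σ ^ k) u)) :=
    rel_zpow σ (fun u v => e.SameCycle (π u) (π v)) (fun u => SameCycle.refl _ _)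
      (fun h => h.symm) (fun h h' => h.trans h') T1
  -- transfer backward
  have S1 : ∀ z, σ.SameCycle (some z) (some (e z)) := by
    intro z
    by_cases h : e z = a
    · refine SameCycle.trans (y := (none : Option β)) ⟨1, ?_⟩ ⟨1, ?_⟩
      · simp [hsome z, h]
      · simp [hnone, h]
    · exact ⟨1, by simp [hsome z, h]⟩
  have S2 : ∀ (k : ℤ) (z), σ.SameCycle (some z) (some ((e ^ k) z)) :=
    rel_zpow e (fun z w => σ.SameCycle (some z) (some w)) (fun u => SameCycle.refl _ _)
      (fun h => h.symm) (fun h h' => h.trans h') S1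
  have Snone : σ.SameCycle none (some a) := ⟨1, by simpa using hnone⟩
  have back : ∀ u v, e.SameCycle (π u) (π v) → σ.SameCycle u v := by
    rintro (_|x) (_|y) ⟨k, hk⟩
    · exact SameCycle.refl _ _
    · have h2 := S2 k a
      rw [show (e ^ k) a = y from by simpa [hπ] using hk] at h2
      exact Snone.trans h2
    · have h2 := S2 k x
      rw [show (e ^ k) x = a from by simpa [hπ] using hk] at h2
      exact h2.trans Snone.symm
    · have h2 := S2 k x
      rw [show (e ^ k) x = y from by simpa [hπ] using hk] at h2
      exact h2
  have key : ∀ u v : Option β, (SameCycle.setoid σ).r u v →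
      Quotient.mk (SameCycle.setoid e) (π u) = Quotient.mk _ (π v) := by
    rintro u v (h : Perm.SameCycle _ _ _)
    obtain ⟨k, hk⟩ := h
    exact Quotient.sound (hk ▸ T2 k u)
  have key2 : ∀ a b : β, (SameCycle.setoid e).r a b →
      Quotient.mk (SameCycle.setoid σ) (some a) = Quotient.mk _ (some b) := by
    intro z w h
    exact Quotient.sound (back (some z) (some w) (by exact h))
  have : Nat.card (Quotient (SameCycle.setoid σ))
      = Nat.card (Quotient (SameCycle.setoid e)) := by
    refine Nat.card_congr ⟨Quotient.lift _ key, Quotient.lift _ key2, ?_, ?_⟩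
    · rintro ⟨(_|x)⟩
      · exact Quotient.sound (Snone.symm : Perm.SameCycle σ (some a) none)
      · rfl
    · rintro ⟨x⟩; rfl
  rw [cQ, cQ, this]

end OptionCount

section Congr

variable {γ δ : Type*}

private def pcHom (g : γ ≃ δ) : Perm γ →* Perm δ where
  toFun := g.permCongr
  map_one' := by ext u; simp
  map_mul' a b := by ext u; simp [Equiv.permCongr_apply]

private theorem permCongr_zpow (g : γ ≃ δ) (σ : Perm γ) (k : ℤ) :
    (g.permCongr σ) ^ k = g.permCongr (σ ^ k) := by
  simpa [pcHom] using (map_zpow (pcHom g) σ k).symm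

private theorem sameCycle_permCongr {g : γ ≃ δ} {σ : Perm γ} {u v : δ} :
    Perm.SameCycle (g.permCongr σ) u v ↔ σ.SameCycle (g.symm u) (g.symm v) := by
  constructor
  · rintro ⟨k, hk⟩
    refine ⟨k, ?_⟩
    rw [permCongr_zpow] at hk
    simp only [Equiv.permCongr_apply] at hk
    rw [← hk]; simp
  · rintro ⟨k, hk⟩
    exact ⟨k, by rw [permCongr_zpow]; simp [Equiv.permCongr_apply, hk]⟩

private theorem cQ_permCongr (g : γ ≃ δ) (σ : Perm γ) : cQ (g.permCongr σ) = cQ σ := by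
  have key : ∀ u v : δ, (SameCycle.setoid (g.permCongr σ)).r u v →
      Quotient.mk (SameCycle.setoid σ) (g.symm u) = Quotient.mk _ (g.symm v) :=
    fun u v h => Quotient.sound (sameCycle_permCongr.1 h)
  have key2 : ∀ a b : γ, (SameCycle.setoid σ).r a b →
      Quotient.mk (SameCycle.setoid (g.permCongr σ)) (g a) = Quotient.mk _ (g b) :=
    fun a b h => Quotient.sound (sameCycle_permCongr.2 (by rw [Equiv.symm_apply_apply, Equiv.symm_apply_apply]; exact h))
  refine Nat.card_congr ⟨Quotient.lift _ key, Quotient.lift _ key2, ?_, ?_⟩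
  · rintro ⟨u⟩
    exact congrArg (Quotient.mk _) (by simp)
  · rintro ⟨a⟩
    exact congrArg (Quotient.mk _) (by simp)

end Congr

private theorem cQ_decomposeFin {n : ℕ} (p : Fin (n + 1)) (e : Perm (Fin n)) :
    cQ (Equiv.Perm.decomposeFin.symm (p, e)) = cQ e + (if p = 0 then 1 else 0) := by
  have hd : Equiv.Perm.decomposeFin.symm (p, e)
      = ((finSuccEquiv n).symm.permCongr)
        (Equiv.Perm.decomposeOption.symm (finSuccEquiv n p, e)) := rfl
  rw [hd, cQ_permCongr]
  have hdo : Equiv.Perm.decomposeOption.symm (finSuccEquiv n p, e)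
      = Equiv.swap none (finSuccEquiv n p) * Equiv.optionCongr e := rfl
  rw [hdo]
  refine Fin.cases ?_ ?_ p
  · rw [if_pos rfl, finSuccEquiv_zero]
    have : Equiv.swap (none : Option (Fin n)) none = 1 := Equiv.swap_self _
    rw [this, one_mul, cQ_optionCongr]
  · intro i
    rw [if_neg (Fin.succ_ne_zero i), finSuccEquiv_succ, cQ_insert, Nat.add_zero]

private theorem sum_pow_cQ (n : ℕ) (x : ℝ) :
    ∑ s : Perm (Fin n), x ^ cQ s = ∏ j ∈ Finset.range n, (x + j) := by
  induction n with
  | zero =>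
      have h0 : ∀ σ : Perm (Fin 0), cQ σ = 0 := by
        intro σ
        have : IsEmpty (Quotient (SameCycle.setoid σ)) :=
          ⟨fun q => Quotient.ind (motive := fun _ => False) (fun a => a.elim0) q⟩
        exact Nat.card_of_isEmpty
      simp [h0]
  | succ n ih =>
      rw [← Equiv.sum_comp (Equiv.Perm.decomposeFin (n := n)).symm (fun s => x ^ cQ s)]
      rw [Fintype.sum_prod_type]
      have hterm : ∀ (p : Fin (n + 1)) (e : Perm (Fin n)),
          x ^ cQ (Equiv.Perm.decomposeFin.symm (p, e))
            = (if p = 0 then x else 1) * x ^ cQ e := by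
        intro p e
        rw [cQ_decomposeFin, pow_add]
        split <;> simp [mul_comm]
      simp_rw [hterm]
      have hfac : ∀ p : Fin (n + 1), ∑ e : Perm (Fin n),
          (if p = 0 then x else 1) * x ^ cQ e
            = (if p = 0 then x else 1) * ∑ e : Perm (Fin n), x ^ cQ e := fun p => by
        rw [Finset.mul_sum]
      simp_rw [hfac, ih]
      rw [← Finset.sum_mul]
      have hsum : ∑ p : Fin (n + 1), (if p = 0 then x else 1) = x + n := by
        have : ∀ p : Fin (n + 1), (if p = 0 then x else 1)
            = (if p = 0 then x - 1 else 0) + 1 := fun p => by split <;> ring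
        simp_rw [this]
        rw [Finset.sum_add_distrib, Finset.sum_ite_eq' Finset.univ (0 : Fin (n + 1))
          (fun _ => x - 1)]
        simp
      rw [hsum, Finset.prod_range_succ]
      push_cast
      ring

/-- `∑_{s ∈ Sym(n)} x^{c(s)} = x(x+1)⋯(x+n-1)`, where `c(s)` is the number of
cycles of `s` counting fixed points as cycles of length 1. -/
theorem sum_pow_cycles (n : ℕ) (hn : 1 ≤ n) (x : ℝ) :
    ∑ s : Equiv.Perm (Fin n),
        x ^ ((n - s.support.card) + Multiset.card s.cycleType) =
      ∏ j ∈ Finset.range n, (x + j) := by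
  have h : ∀ s : Perm (Fin n),
      (n - s.support.card) + Multiset.card s.cycleType = cQ s := fun s => by
    rw [cQ_eq, Fintype.card_fin]
  simp_rw [h]
  exact sum_pow_cQ n x
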